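/- arXiv:2508.09869 — 2 statements merged into one kernel-verified Lean document; each statement's English description precedes it below -/
import Mathlib

section
/- For every fair division instance with finitely many agents and finitely many indivisible items, where each agent has an additive (nonnegative) valuation, there exists an allocation of all items that is envy-free up to one item (EF1). -/
/-- An allocation: pairwise disjoint bundles covering all items. -/
def IsAllocation {n m : ℕ} (A : Fin n → Finset (Fin m)) : Prop :=
  (∀ i j, i ≠ j → Disjoint (A i) (A j)) ∧ Finset.univ.biUnion A = Finset.univ

/-- Envy-freeness up to one item for additive valuations given by item values `v`. -/
def IsEF1 {n m : ℕ} (v : Fin n → Fin m → ℝ) (A : Fin n → Finset (Fin m)) : Prop :=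
  ∀ i j, A j ≠ ∅ → ∃ g ∈ A j, ∑ x ∈ (A j).erase g, v i x ≤ ∑ x ∈ A i, v i x

/-- Round-robin key lemma: for any set `S` of remaining items and priority
function `p`, there is a partition of `S` such that any agent with strictly
smaller priority does not envy at all, and every agent is EF1 toward everyone. -/
lemma ef1_key {n m : ℕ} (hn : 0 < n) (v : Fin n → Fin m → ℝ)
    (hv : ∀ i g, 0 ≤ v i g) (S : Finset (Fin m)) (p : Fin n → ℕ) :
    ∃ A : Fin n → Finset (Fin m),
      (∀ i j, i ≠ j → Disjoint (A i) (A j)) ∧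
      (Finset.univ.biUnion A = S) ∧
      (∀ i j, (p i < p j → ∑ x ∈ A j, v i x ≤ ∑ x ∈ A i, v i x) ∧
        ((∑ x ∈ A j, v i x ≤ ∑ x ∈ A i, v i x) ∨
          ∃ h ∈ A j, ∑ x ∈ (A j).erase h, v i x ≤ ∑ x ∈ A i, v i x)) := by
  induction S using Finset.strongInduction generalizing p with
  | _ S ih =>
  rcases S.eq_empty_or_nonempty with rfl | hS
  · exact ⟨fun _ => ∅, by simp, by ext x; simp, fun i j => ⟨fun _ => le_refl 0, Or.inl (le_refl 0)⟩⟩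
  -- agent with minimal priority
  obtain ⟨a, -, ha⟩ := Finset.exists_min_image (Finset.univ : Finset (Fin n)) p
    ⟨⟨0, hn⟩, Finset.mem_univ _⟩
  -- a's favorite item in S
  obtain ⟨g, hgS, hg⟩ := Finset.exists_max_image S (v a) hS
  have hsub : S.erase g ⊂ S := Finset.erase_ssubset hgS
  set p' : Fin n → ℕ := fun i => if i = a then (Finset.univ.sup p) + 1 else p i with hp'
  obtain ⟨A', hdisj, hcover, hinv⟩ := ih (S.erase g) hsub p'
  have hAsub : ∀ i, A' i ⊆ S.erase g := by
    intro i x hx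
    rw [← hcover]
    exact Finset.mem_biUnion.2 ⟨i, Finset.mem_univ _, hx⟩
  have hgnot : ∀ i, g ∉ A' i := fun i hgi => (Finset.notMem_erase g S) (hAsub i hgi)
  set A : Fin n → Finset (Fin m) := fun i => if i = a then insert g (A' a) else A' i with hA
  have hAa : A a = insert g (A' a) := by simp [hA]
  have hAne : ∀ i, i ≠ a → A i = A' i := fun i hi => by simp [hA, hi]
  have hsumAa : ∀ i, ∑ x ∈ A a, v i x = v i g + ∑ x ∈ A' a, v i x := by
    intro i; rw [hAa, Finset.sum_insert (hgnot a)]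
  have hp'lt : ∀ i, i ≠ a → p' i < p' a := by
    intro i hi
    simp only [hp', hi, if_neg, if_pos]
    exact Nat.lt_succ_of_le (Finset.le_sup (Finset.mem_univ i))
  have hp'eq : ∀ i, i ≠ a → p' i = p i := by intro i hi; simp [hp', hi]
  refine ⟨A, ?_, ?_, ?_⟩
  · -- disjointness
    intro i j hij
    rcases eq_or_ne a i with rfl | hi
    · have hj : j ≠ a := fun h => hij h.symm
      rw [hAa, hAne j hj]
      exact Finset.disjoint_insert_left.2 ⟨hgnot j, hdisj _ _ hij⟩
    · rcases eq_or_ne a j with rfl | hj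
      · rw [hAne i hi.symm, hAa]
        exact Finset.disjoint_insert_right.2 ⟨hgnot i, hdisj _ _ hij⟩
      · rw [hAne i hi.symm, hAne j hj.symm]; exact hdisj _ _ hij
  · -- cover
    apply Finset.Subset.antisymm
    · intro x hx
      obtain ⟨i, -, hxi⟩ := Finset.mem_biUnion.1 hx
      rcases eq_or_ne a i with rfl | hi
      · rw [hAa] at hxi
        rcases Finset.mem_insert.1 hxi with rfl | hxi
        · exact hgS
        · exact Finset.mem_of_mem_erase (hAsub a hxi)
      · rw [hAne i hi.symm] at hxi
        exact Finset.mem_of_mem_erase (hAsub i hxi)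
    · intro x hx
      rcases eq_or_ne g x with rfl | hxg
      · exact Finset.mem_biUnion.2 ⟨a, Finset.mem_univ _, by rw [hAa]; exact Finset.mem_insert_self _ _⟩
      · have : x ∈ S.erase g := Finset.mem_erase.2 ⟨hxg.symm, hx⟩
        rw [← hcover] at this
        obtain ⟨i, -, hxi⟩ := Finset.mem_biUnion.1 this
        refine Finset.mem_biUnion.2 ⟨i, Finset.mem_univ _, ?_⟩
        rcases eq_or_ne a i with rfl | hi
        · rw [hAa]; exact Finset.mem_insert_of_mem hxi
        · rwa [hAne i hi.symm]
  · -- invariant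
    intro i j
    rcases eq_or_ne a i with rfl | hi
    · rcases eq_or_ne a j with rfl | hj
      · exact ⟨fun _ => le_refl _, Or.inl (le_refl _)⟩
      · -- i = a, j ≠ a : full no-envy
        have key : ∑ x ∈ A j, v a x ≤ ∑ x ∈ A a, v a x := by
          rcases (hinv a j).2 with h1 | ⟨h, hh, h2⟩
          · rw [hAne j hj.symm, hsumAa a]
            calc ∑ x ∈ A' j, v a x ≤ ∑ x ∈ A' a, v a x := h1
              _ ≤ v a g + ∑ x ∈ A' a, v a x := le_add_of_nonneg_left (hv a g)
          · rw [hAne j hj.symm, hsumAa a]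
            have hhS : h ∈ S := Finset.mem_of_mem_erase (hAsub j hh)
            have he : ∑ x ∈ A' j, v a x = v a h + ∑ x ∈ (A' j).erase h, v a x :=
              (Finset.add_sum_erase _ _ hh).symm
            rw [he]
            exact add_le_add (hg h hhS) h2
        exact ⟨fun _ => key, Or.inl key⟩
    · rcases eq_or_ne a j with rfl | hj
      · -- j = a, i ≠ a
        have hie : ∑ x ∈ A i, v i x = ∑ x ∈ A' i, v i x := by rw [hAne i hi.symm]
        have hnoenvy : ∑ x ∈ A' a, v i x ≤ ∑ x ∈ A' i, v i x :=
          (hinv i a).1 (hp'lt i hi.symm)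
        constructor
        · intro hlt
          exact absurd (ha i (Finset.mem_univ i)) (not_le.2 hlt)
        · right
          refine ⟨g, by rw [hAa]; exact Finset.mem_insert_self _ _, ?_⟩
          rw [hie, hAa, Finset.erase_insert (hgnot a)]
          exact hnoenvy
      · -- both ≠ a
        rw [hAne i hi.symm, hAne j hj.symm]
        have := hinv i j
        rw [hp'eq i hi.symm, hp'eq j hj.symm] at this
        exact this

/-- every fair division instance with additive nonnegative valuations
admits an EF1 allocation of all items. -/
theorem ef1_exists {n m : ℕ} (hn : 2 ≤ n) (v : Fin n → Fin m → ℝ)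
    (hv : ∀ i g, 0 ≤ v i g) :
    ∃ A : Fin n → Finset (Fin m), IsAllocation A ∧ IsEF1 v A := by
  obtain ⟨A, hd, hc, hinv⟩ := ef1_key (by omega) v hv Finset.univ (fun _ => 0)
  refine ⟨A, ⟨hd, hc⟩, fun i j hne => ?_⟩
  rcases (hinv i j).2 with h1 | ⟨h, hh, h2⟩
  · obtain ⟨g, hg⟩ := Finset.nonempty_iff_ne_empty.2 hne
    refine ⟨g, hg, le_trans ?_ h1⟩
    exact Finset.sum_le_sum_of_subset_of_nonneg (Finset.erase_subset _ _)
      (fun x _ _ => hv i x)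
  · exact ⟨h, hh, h2⟩
end

section
/- For every integer k ≥ 2 there exists a fair division instance with n = k² agents and k² indivisible items, with additive ternary normalized valuations, in which the maximum social welfare over all allocations is at least (k²/(2k−1)) times the social welfare of every EF1 allocation. Consequently, the price of EF1 for n agents with additive ternary valuations is at least √n/2 = Ω(√n). -/
/-- Social welfare of an allocation. -/
def SW {n m : ℕ} (v : Fin n → Fin m → ℝ) (A : Fin n → Finset (Fin m)) : ℝ :=
  ∑ i, ∑ g ∈ A i, v i g

lemma aux_block_card (k : ℕ) (hk : 0 < k) (i : ℕ) (hi : i < k) :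
    (Finset.univ.filter (fun g : Fin (k^2) => g.val / k = i)).card = k := by
  conv_rhs => rw [← Finset.card_fin k]
  apply Finset.card_bij' (fun g _ => (⟨g.val % k, Nat.mod_lt _ hk⟩ : Fin k))
    (fun x _ => (⟨i * k + x.val, by
      have hx := x.isLt
      calc i * k + x.val < (i+1) * k := by nlinarith
        _ ≤ k * k := Nat.mul_le_mul_right k hi
        _ = k ^ 2 := (sq k).symm⟩ : Fin (k^2)))
  case hi => intro g hg; exact Finset.mem_univ _
  case hj =>
    intro x hx
    simp only [Finset.mem_filter, Finset.mem_univ, true_and]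
    rw [mul_comm, Nat.mul_add_div hk, Nat.div_eq_of_lt x.isLt, add_zero]
  case left_inv =>
    intro g hg
    simp only [Finset.mem_filter, Finset.mem_univ, true_and] at hg
    apply Fin.ext
    simp only
    rw [mul_comm i k, ← hg]
    exact Nat.div_add_mod g.val k
  case right_inv =>
    intro x hx
    apply Fin.ext
    simp only
    rw [mul_comm i k, Nat.mul_add_mod, Nat.mod_eq_of_lt x.isLt]

/-- The valuation: agents with index below `k` are special, valuing their block of `k`
items at `k` each; the others are dummies valuing every item at `1`. -/
def pv (k : ℕ) (i g : Fin (k^2)) : ℝ :=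
  if i.val < k then (if g.val / k = i.val then (k:ℝ) else 0) else 1

def pOpt (k : ℕ) (j : Fin (k^2)) : Finset (Fin (k^2)) :=
  if j.val < k then Finset.univ.filter (fun g => g.val / k = j.val) else ∅

lemma pv_nonneg (k : ℕ) (i g : Fin (k^2)) : 0 ≤ pv k i g := by
  unfold pv
  split
  · split
    · positivity
    · exact le_rfl
  · norm_num

lemma SW_nonneg (k : ℕ) (A : Fin (k^2) → Finset (Fin (k^2))) : 0 ≤ SW (pv k) A := by
  apply Finset.sum_nonneg; intro i _
  exact Finset.sum_nonneg fun g _ => pv_nonneg k i g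

lemma pv_sum_bundle (k : ℕ) (j : Fin (k^2)) (S : Finset (Fin (k^2))) :
    ∑ g ∈ S, pv k j g =
      if j.val < k then (k:ℝ) * (S.filter (fun g => g.val / k = j.val)).card
      else (S.card : ℝ) := by
  unfold pv
  by_cases hj : j.val < k
  · rw [if_pos hj]
    simp only [if_pos hj]
    rw [← Finset.sum_filter, Finset.sum_const, nsmul_eq_mul, mul_comm]
  · rw [if_neg hj]
    simp only [if_neg hj]
    rw [Finset.sum_const, nsmul_eq_mul, mul_one]

lemma aux_sp_card (k : ℕ) (hk : 0 < k) :
    (Finset.univ.filter (fun j : Fin (k^2) => j.val < k)).card = k := by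
  have heq : (Finset.univ.filter (fun j : Fin (k^2) => j.val < k)) =
      Finset.univ.filter (fun j : Fin (k^2) => j.val / k = 0) := by
    apply Finset.filter_congr
    intro j _
    constructor
    · intro h
      simp [Nat.div_eq_of_lt h]
    · intro h
      by_contra hc
      have h1 : 1 ≤ j.val / k := (Nat.one_le_div_iff hk).mpr (le_of_not_gt hc)
      omega
  rw [heq, aux_block_card k hk 0 hk]

lemma pv_sum_univ (k : ℕ) (hk : 0 < k) (i : Fin (k^2)) :
    ∑ g, pv k i g = (k:ℝ)^2 := by
  rw [pv_sum_bundle]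
  by_cases hi : i.val < k
  · rw [if_pos hi, aux_block_card k hk i.val hi]
    ring
  · rw [if_neg hi, Finset.card_univ, Fintype.card_fin]
    push_cast
    ring

lemma pOpt_alloc (k : ℕ) (hk : 0 < k) : IsAllocation (pOpt k) := by
  constructor
  · intro i j hij
    unfold pOpt
    split
    · split
      · rw [Finset.disjoint_left]
        intro g hgi hgj
        simp only [Finset.mem_filter, Finset.mem_univ, true_and] at hgi hgj
        exact hij (Fin.ext (hgi ▸ hgj))
      · exact Finset.disjoint_empty_right _
    · exact Finset.disjoint_empty_left _
  · apply Finset.eq_univ_iff_forall.mpr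
    intro g
    rw [Finset.mem_biUnion]
    have hg : g.val / k < k := by
      rw [Nat.div_lt_iff_lt_mul hk]
      have := g.isLt
      calc g.val < k ^ 2 := g.isLt
        _ = k * k := sq k
    refine ⟨⟨g.val / k, lt_of_lt_of_le hg (Nat.le_self_pow two_ne_zero k)⟩,
      Finset.mem_univ _, ?_⟩
    · unfold pOpt
      rw [if_pos hg]
      simp

lemma SW_pOpt (k : ℕ) (hk : 0 < k) : SW (pv k) (pOpt k) = (k:ℝ)^3 := by
  unfold SW
  have hterm : ∀ j : Fin (k^2), ∑ g ∈ pOpt k j, pv k j g =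
      if j.val < k then (k:ℝ) * k else 0 := by
    intro j
    rw [pv_sum_bundle]
    unfold pOpt
    by_cases hj : j.val < k
    · rw [if_pos hj, if_pos hj, if_pos hj]
      congr 2
      rw [Finset.filter_filter]
      have : (Finset.univ.filter (fun g : Fin (k^2) => g.val / k = j.val ∧ g.val / k = j.val))
          = Finset.univ.filter (fun g : Fin (k^2) => g.val / k = j.val) := by
        apply Finset.filter_congr
        intro g _
        simp
      rw [this, aux_block_card k hk j.val hj]
    · rw [if_neg hj, if_neg hj, if_neg hj]
      simp
  rw [Finset.sum_congr rfl (fun j _ => hterm j)]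
  rw [Finset.sum_ite, Finset.sum_const, Finset.sum_const, aux_sp_card k hk]
  simp only [smul_zero, add_zero, nsmul_eq_mul]
  ring

lemma SW_EF1_le (k : ℕ) (hk : 2 ≤ k) (A : Fin (k^2) → Finset (Fin (k^2)))
    (hA : IsAllocation A) (hE : IsEF1 (pv k) A) :
    SW (pv k) A ≤ (k:ℝ) * (2 * k - 1) := by
  have hk0 : 0 < k := by omega
  have hkk : k < k ^ 2 := by nlinarith [sq k]
  set Sp := Finset.univ.filter (fun j : Fin (k^2) => j.val < k) with hSp
  set D := Finset.univ.filter (fun j : Fin (k^2) => ¬ j.val < k) with hD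
  have hSpcard : Sp.card = k := aux_sp_card k hk0
  have hsplitcard : Sp.card + D.card = k ^ 2 := by
    rw [hSp, hD, Finset.card_filter_add_card_filter_not, Finset.card_univ,
      Fintype.card_fin]
  -- a dummy with minimum bundle size
  have hDne : D.Nonempty := ⟨⟨k, hkk⟩, by simp [hD]⟩
  obtain ⟨d, hdD, hdmin⟩ := Finset.exists_min_image D (fun j => (A j).card) hDne
  have hdk : ¬ d.val < k := by
    have := Finset.mem_filter.mp hdD
    exact this.2
  -- every bundle has size at most (A d).card + 1
  have hsize : ∀ j : Fin (k^2), (A j).card ≤ (A d).card + 1 := by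
    intro j
    rcases eq_or_ne (A j) ∅ with h | h
    · simp [h]
    · obtain ⟨g, hg, hle⟩ := hE d j h
      have h1 : ∑ x ∈ (A j).erase g, pv k d x = (((A j).erase g).card : ℝ) := by
        unfold pv
        simp [hdk]
      have h2 : ∑ x ∈ A d, pv k d x = ((A d).card : ℝ) := by
        unfold pv
        simp [hdk]
      rw [h1, h2] at hle
      have h3 : ((A j).erase g).card ≤ (A d).card := by exact_mod_cast hle
      have h4 := Finset.card_erase_of_mem hg
      omega
  -- total number of items
  have hsums : ∑ j, (A j).card = k ^ 2 := by
    obtain ⟨hdisj, hcover⟩ := hA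
    have := Finset.card_biUnion (s := Finset.univ) (t := A)
      (fun x _ y _ hxy => hdisj x y hxy)
    rw [hcover, Finset.card_univ, Fintype.card_fin] at this
    omega
  have hsplit : ∑ j ∈ Sp, (A j).card + ∑ j ∈ D, (A j).card = k ^ 2 := by
    rw [hSp, hD, Finset.sum_filter_add_sum_filter_not]
    exact hsums
  have hDlb : D.card * (A d).card ≤ ∑ j ∈ D, (A j).card := by
    have := Finset.card_nsmul_le_sum D (fun j => (A j).card) ((A d).card)
      (fun j hj => hdmin j hj)
    simpa using this
  set t := ∑ j ∈ Sp, (A j).card with ht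
  set m1 := ∑ j ∈ Sp, ((A j).filter (fun g => g.val / k = j.val)).card with hm1
  have hm1t : m1 ≤ t := by
    apply Finset.sum_le_sum
    intro j _
    exact Finset.card_filter_le _ _
  have hm1k2 : m1 ≤ k * ((A d).card + 1) := by
    calc m1 ≤ ∑ j ∈ Sp, ((A d).card + 1) := by
          apply Finset.sum_le_sum
          intro j _
          exact le_trans (Finset.card_filter_le _ _) (hsize j)
      _ = k * ((A d).card + 1) := by rw [Finset.sum_const, hSpcard, smul_eq_mul]
  -- m1 ≤ k
  have hm1k : m1 ≤ k := by
    have hDc : D.card = k ^ 2 - k := by omega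
    have h1 : t + (k ^ 2 - k) * (A d).card ≤ k ^ 2 := by
      rw [← hDc]
      omega
    rcases Nat.eq_zero_or_pos (A d).card with hs | hs
    · rw [hs] at hm1k2
      simpa using hm1k2
    · have h2 : k ^ 2 - k ≤ (k ^ 2 - k) * (A d).card := Nat.le_mul_of_pos_right _ hs
      have key : ∀ K X : ℕ, m1 ≤ t → t + X ≤ K → K - k ≤ X → k ≤ K → m1 ≤ k := by
        intro K X a1 a2 a3 a4
        omega
      exact key (k ^ 2) ((k ^ 2 - k) * (A d).card) hm1t h1 (by omega) (le_of_lt hkk)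
  -- compute SW
  have hSW : SW (pv k) A = (k:ℝ) * m1 + ((∑ j ∈ D, (A j).card : ℕ) : ℝ) := by
    unfold SW
    rw [Finset.sum_congr rfl (fun j (_ : j ∈ Finset.univ) => pv_sum_bundle k j (A j))]
    rw [Finset.sum_ite, ← Finset.mul_sum]
    simp only [hm1, hSp, hD, Nat.cast_sum]
  have hDt : ((∑ j ∈ D, (A j).card : ℕ) : ℝ) = (k:ℝ)^2 - t := by
    have : (t : ℝ) + ((∑ j ∈ D, (A j).card : ℕ) : ℝ) = ((k^2 : ℕ) : ℝ) := by
      exact_mod_cast congrArg (Nat.cast : ℕ → ℝ) hsplit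
    push_cast at this ⊢
    linarith
  rw [hSW, hDt]
  have c1 : (m1 : ℝ) ≤ (k : ℝ) := by exact_mod_cast hm1k
  have c2 : (m1 : ℝ) ≤ (t : ℝ) := by exact_mod_cast hm1t
  have c3 : (1 : ℝ) ≤ (k : ℝ) := by exact_mod_cast (by omega : 1 ≤ k)
  nlinarith [mul_le_mul_of_nonneg_left c1 (by linarith : (0:ℝ) ≤ (k:ℝ) - 1)]

/-- for every `k ≥ 2` there is an instance with `k²` agents and `k²` items,
with additive ternary normalized valuations, in which some allocation has social welfare
at least `k²/(2k-1)` (hence at least `√(k²)/2`) times that of every EF1 allocation. -/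
theorem price_of_ef1_lower_bound (k : ℕ) (hk : 2 ≤ k) :
    ∃ (a b : ℝ) (v : Fin (k ^ 2) → Fin (k ^ 2) → ℝ),
      b < a ∧ 0 < b ∧
      (∀ i g, v i g = a ∨ v i g = b ∨ v i g = 0) ∧
      (∀ g, ∃ i, 0 < v i g) ∧
      (∀ i j, ∑ g, v i g = ∑ g, v j g) ∧
      ∃ Opt : Fin (k ^ 2) → Finset (Fin (k ^ 2)),
        IsAllocation Opt ∧
        ∀ A : Fin (k ^ 2) → Finset (Fin (k ^ 2)), IsAllocation A → IsEF1 v A →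
          ((k : ℝ) ^ 2 / (2 * k - 1)) * SW v A ≤ SW v Opt ∧
          (Real.sqrt ((k : ℝ) ^ 2) / 2) * SW v A ≤ SW v Opt := by
  have hk0 : 0 < k := by omega
  have hkR : (2 : ℝ) ≤ (k : ℝ) := by exact_mod_cast hk
  have hkk : k < k ^ 2 := by nlinarith [sq k]
  refine ⟨(k : ℝ), 1, pv k, by linarith, one_pos, ?_, ?_, ?_, pOpt k, pOpt_alloc k hk0, ?_⟩
  · intro i g
    unfold pv
    split
    · split
      · left; rfl
      · right; right; rfl
    · right; left; rfl
  · intro g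
    refine ⟨⟨k, hkk⟩, ?_⟩
    unfold pv
    simp
  · intro i j
    rw [pv_sum_univ k hk0 i, pv_sum_univ k hk0 j]
  · intro A hA hE
    have hW := SW_EF1_le k hk A hA hE
    have hW0 := SW_nonneg k A
    have hOpt := SW_pOpt k hk0
    rw [hOpt]
    have h2k : (0 : ℝ) < 2 * (k : ℝ) - 1 := by linarith
    constructor
    · rw [div_mul_eq_mul_div, div_le_iff₀ h2k]
      calc (k : ℝ) ^ 2 * SW (pv k) A ≤ (k : ℝ) ^ 2 * ((k : ℝ) * (2 * k - 1)) :=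
            mul_le_mul_of_nonneg_left hW (sq_nonneg _)
        _ = (k : ℝ) ^ 3 * (2 * k - 1) := by ring
    · rw [Real.sqrt_sq (by positivity : (0 : ℝ) ≤ (k : ℝ))]
      calc (k : ℝ) / 2 * SW (pv k) A ≤ (k : ℝ) / 2 * ((k : ℝ) * (2 * k - 1)) :=
            mul_le_mul_of_nonneg_left hW (by positivity)
        _ ≤ (k : ℝ) ^ 3 := by nlinarith [sq_nonneg (k : ℝ)]
end
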